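/- For every δ ∈ (0,1) and every k ∈ {1,…,n−2}, let ε*_k ∈ (0,1) be the unique minimizer of ε ↦ D1(ε;k) + D2(ε;k) on (0,1). Then D1(ε;k) + D2(ε;k) > D1(ε;k+1) + D2(ε;k+1) for all ε ∈ (0,ε*_k), and D1(ε;k) + D2(ε;k) < D1(ε;k+1) + D2(ε;k+1) for all ε ∈ (ε*_k,1); in particular the two curves cross exactly once on (0,1), at ε = ε*_k. -/

import Mathlib

open Finset

/-- `D1(ε;k) = ((1−δ)/C(n−1,n−k−1))·ε^{−(n−k−1)}·(1−ε)^{−(k+1)}`. -/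
noncomputable def D1 (n k : ℕ) (δ ε : ℝ) : ℝ :=
  ((1 - δ) / ((n - 1).choose (n - k - 1) : ℝ)) * (ε ^ (n - k - 1))⁻¹ *
    ((1 - ε) ^ (k + 1))⁻¹

/-- `D2(ε;k) = δ·Σ_{q=0}^{k} (C(n−1,n−k−1+q)/C(n−1,n−k−1))·ε^q·(1−ε)^{−(q+1)}`. -/
noncomputable def D2 (n k : ℕ) (δ ε : ℝ) : ℝ :=
  δ * ∑ q ∈ range (k + 1),
    (((n - 1).choose (n - k - 1 + q) : ℝ) / ((n - 1).choose (n - k - 1) : ℝ)) *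
      ε ^ q * ((1 - ε) ^ (q + 1))⁻¹


/-! ### Auxiliary machinery -/

noncomputable def Tt (q : ℕ) (ε : ℝ) : ℝ := ε ^ q * ((1 - ε) ^ (q + 1))⁻¹
noncomputable def Pp (a b : ℕ) (ε : ℝ) : ℝ := (ε ^ a)⁻¹ * ((1 - ε) ^ b)⁻¹

lemma hasDerivAt_one_sub (ε : ℝ) : HasDerivAt (fun x : ℝ => 1 - x) (-1) ε := by
  simpa using (hasDerivAt_id ε).const_sub 1

lemma Tt_pos (q : ℕ) {ε : ℝ} (h0 : 0 < ε) (h1 : ε < 1) : 0 < Tt q ε := by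
  have : (0:ℝ) < 1 - ε := by linarith
  unfold Tt; positivity

lemma Pp_pos (a b : ℕ) {ε : ℝ} (h0 : 0 < ε) (h1 : ε < 1) : 0 < Pp a b ε := by
  have : (0:ℝ) < 1 - ε := by linarith
  unfold Pp; positivity

lemma Tt_succ (q : ℕ) {ε : ℝ} (h1 : (1:ℝ) - ε ≠ 0) :
    Tt (q+1) ε = ε * (1 - ε)⁻¹ * Tt q ε := by
  unfold Tt
  rw [pow_succ ε, pow_succ (1-ε)]
  field_simp

lemma hasDerivAt_Tt (q : ℕ) {ε : ℝ} (h0 : ε ≠ 0) (h1 : (1:ℝ) - ε ≠ 0) :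
    HasDerivAt (Tt q) (((q:ℝ) * ε⁻¹ + ((q:ℝ) + 1) * (1 - ε)⁻¹) * Tt q ε) ε := by
  have hp : HasDerivAt (fun x : ℝ => x ^ q) ((q:ℝ) * ε ^ (q - 1)) ε := hasDerivAt_pow q ε
  have hs : HasDerivAt (fun x : ℝ => (1 - x) ^ (q+1))
      (((q:ℝ)+1) * (1-ε)^q * (-1)) ε := by
    simpa using (hasDerivAt_one_sub ε).fun_pow (q+1)
  have hinv := hs.fun_inv (pow_ne_zero _ h1)
  have key := hp.fun_mul hinv
  have heq : ((q:ℝ) * ε ^ (q-1)) * ((1-ε)^(q+1))⁻¹ +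
      ε ^ q * (-(((q:ℝ)+1) * (1-ε)^q * (-1)) / ((1-ε)^(q+1))^2)
      = ((q:ℝ) * ε⁻¹ + ((q:ℝ) + 1) * (1 - ε)⁻¹) * Tt q ε := by
    unfold Tt
    cases q with
    | zero => simp; field_simp
    | succ m =>
      rw [show m + 1 - 1 = m from rfl]
      rw [pow_succ ε m]
      field_simp
      ring
  rw [← heq]
  exact key

lemma hasDerivAt_Pp (a b : ℕ) {ε : ℝ} (h0 : ε ≠ 0) (h1 : (1:ℝ) - ε ≠ 0) :
    HasDerivAt (Pp a b) (((b:ℝ) * (1 - ε)⁻¹ - (a:ℝ) * ε⁻¹) * Pp a b ε) ε := by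
  have hp := (hasDerivAt_pow a ε).fun_inv (pow_ne_zero a h0)
  have hs : HasDerivAt (fun x : ℝ => (1 - x) ^ b) (((b:ℝ)) * (1-ε)^(b-1) * (-1)) ε := by
    simpa using (hasDerivAt_one_sub ε).fun_pow b
  have hinv := hs.fun_inv (pow_ne_zero _ h1)
  have key := hp.fun_mul hinv
  have heq : (-((a:ℝ) * ε ^ (a-1)) / (ε^a)^2) * ((1-ε)^b)⁻¹ +
      (ε^a)⁻¹ * (-(((b:ℝ)) * (1-ε)^(b-1) * (-1)) / ((1-ε)^b)^2)
      = ((b:ℝ) * (1 - ε)⁻¹ - (a:ℝ) * ε⁻¹) * Pp a b ε := by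
    unfold Pp
    cases a with
    | zero =>
      cases b with
      | zero => simp
      | succ mb => rw [show mb + 1 - 1 = mb from rfl, pow_succ (1-ε) mb]; field_simp; ring
    | succ ma =>
      cases b with
      | zero => rw [show ma + 1 - 1 = ma from rfl, pow_succ ε ma]; simp; field_simp
      | succ mb =>
        rw [show ma + 1 - 1 = ma from rfl, show mb + 1 - 1 = mb from rfl,
          pow_succ ε ma, pow_succ (1-ε) mb]
        field_simp
        ring
  rw [← heq]
  exact key

/-- The derivative of `ε ↦ D1 n k δ ε + D2 n k δ ε`. -/
noncomputable def Phi (n k : ℕ) (δ ε : ℝ) : ℝ :=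
  (1 - δ) / ((n - 1).choose (n - k - 1) : ℝ) *
    ((((k + 1 : ℕ):ℝ) * (1 - ε)⁻¹ - ((n - k - 1 : ℕ) : ℝ) * ε⁻¹) * Pp (n - k - 1) (k + 1) ε) +
  δ * ∑ q ∈ range (k + 1),
    (((n - 1).choose (n - k - 1 + q) : ℝ) / ((n - 1).choose (n - k - 1) : ℝ)) *
      ((((q:ℝ) * ε⁻¹ + ((q:ℝ) + 1) * (1 - ε)⁻¹)) * Tt q ε)

/-- The second derivative. -/
noncomputable def Psi (n k : ℕ) (δ ε : ℝ) : ℝ :=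
  (1 - δ) / ((n - 1).choose (n - k - 1) : ℝ) *
    (((((k + 1 : ℕ):ℝ) * ((1 - ε)⁻¹ * (1 - ε)⁻¹) + ((n - k - 1 : ℕ) : ℝ) * (ε⁻¹ * ε⁻¹)) +
      ((((k + 1 : ℕ):ℝ) * (1 - ε)⁻¹ - ((n - k - 1 : ℕ) : ℝ) * ε⁻¹))^2) * Pp (n - k - 1) (k + 1) ε) +
  δ * ∑ q ∈ range (k + 1),
    (((n - 1).choose (n - k - 1 + q) : ℝ) / ((n - 1).choose (n - k - 1) : ℝ)) *
      (((((q:ℝ) + 1) * ((1 - ε)⁻¹ * (1 - ε)⁻¹) - (q:ℝ) * (ε⁻¹ * ε⁻¹)) +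
        (((q:ℝ) * ε⁻¹ + ((q:ℝ) + 1) * (1 - ε)⁻¹))^2) * Tt q ε)

noncomputable def FF (n k : ℕ) (δ : ℝ) : ℝ → ℝ := fun ε => D1 n k δ ε + D2 n k δ ε

lemma FF_eq (n k : ℕ) (δ : ℝ) : FF n k δ = fun ε =>
    (1 - δ) / ((n - 1).choose (n - k - 1) : ℝ) * Pp (n - k - 1) (k + 1) ε +
    δ * ∑ q ∈ range (k + 1),
      (((n - 1).choose (n - k - 1 + q) : ℝ) / ((n - 1).choose (n - k - 1) : ℝ)) * Tt q ε := by
  funext ε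
  unfold FF D1 D2 Pp Tt
  rw [mul_assoc]
  congr 1
  congr 1
  exact Finset.sum_congr rfl fun q _ => by ring

lemma hasDerivAt_FF (n k : ℕ) (δ : ℝ) {ε : ℝ} (h0 : ε ≠ 0) (h1 : (1:ℝ) - ε ≠ 0) :
    HasDerivAt (FF n k δ) (Phi n k δ ε) ε := by
  rw [FF_eq]
  unfold Phi
  exact ((hasDerivAt_Pp (n-k-1) (k+1) h0 h1).const_mul _).add
    ((HasDerivAt.fun_sum fun q _ => (hasDerivAt_Tt q h0 h1).const_mul _).const_mul δ)

lemma hasDerivAt_Phi (n k : ℕ) (δ : ℝ) {ε : ℝ} (h0 : ε ≠ 0) (h1 : (1:ℝ) - ε ≠ 0) :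
    HasDerivAt (Phi n k δ) (Psi n k δ ε) ε := by
  unfold Phi Psi
  have dinv : HasDerivAt (fun x : ℝ => x⁻¹) (-(ε^2)⁻¹) ε := by
    simpa using hasDerivAt_inv h0
  have dinv1 : HasDerivAt (fun x : ℝ => (1-x)⁻¹) (((1-ε)^2)⁻¹) ε := by
    have := ((hasDerivAt_one_sub ε).fun_inv h1)
    simpa using this
  refine HasDerivAt.add ?_ ?_
  · have hc : HasDerivAt (fun x : ℝ => ((k + 1 : ℕ):ℝ) * (1 - x)⁻¹ - ((n - k - 1 : ℕ) : ℝ) * x⁻¹)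
        (((k + 1 : ℕ):ℝ) * ((1-ε)^2)⁻¹ - ((n - k - 1 : ℕ) : ℝ) * (-(ε^2)⁻¹)) ε :=
      (dinv1.const_mul _).sub (dinv.const_mul _)
    have := (hc.fun_mul (hasDerivAt_Pp (n-k-1) (k+1) h0 h1)).const_mul
      ((1 - δ) / ((n - 1).choose (n - k - 1) : ℝ))
    refine this.congr_deriv ?_
    have e1 : ((1-ε)^2)⁻¹ = (1-ε)⁻¹ * (1-ε)⁻¹ := by rw [sq, mul_inv]
    have e2 : ((ε:ℝ)^2)⁻¹ = ε⁻¹ * ε⁻¹ := by rw [sq, mul_inv]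
    rw [e1, e2]; push_cast; ring
  · refine HasDerivAt.const_mul δ (HasDerivAt.fun_sum fun q _ => ?_)
    have hc : HasDerivAt (fun x : ℝ => (q:ℝ) * x⁻¹ + ((q:ℝ) + 1) * (1 - x)⁻¹)
        ((q:ℝ) * (-(ε^2)⁻¹) + ((q:ℝ) + 1) * ((1-ε)^2)⁻¹) ε :=
      (dinv.const_mul _).add (dinv1.const_mul _)
    have := (hc.fun_mul (hasDerivAt_Tt q h0 h1)).const_mul
      (((n - 1).choose (n - k - 1 + q) : ℝ) / ((n - 1).choose (n - k - 1) : ℝ))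
    refine this.congr_deriv ?_
    have e1 : ((1-ε)^2)⁻¹ = (1-ε)⁻¹ * (1-ε)⁻¹ := by rw [sq, mul_inv]
    have e2 : ((ε:ℝ)^2)⁻¹ = ε⁻¹ * ε⁻¹ := by rw [sq, mul_inv]
    rw [e1, e2]; ring

lemma Psi_pos (n k : ℕ) (hk2 : k ≤ n - 2) (hn : 3 ≤ n) {δ ε : ℝ}
    (hδ0 : 0 < δ) (hδ1 : δ < 1) (h0 : 0 < ε) (h1 : ε < 1) :
    0 < Psi n k δ ε := by
  have hv : (0:ℝ) < 1 - ε := by linarith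
  have hx : (0:ℝ) < ε⁻¹ := by positivity
  have hy : (0:ℝ) < (1-ε)⁻¹ := by positivity
  have hcpos : (0:ℝ) < ((n - 1).choose (n - k - 1) : ℝ) := by
    exact_mod_cast Nat.choose_pos (by omega)
  unfold Psi
  have t1 : 0 < (1 - δ) / ((n - 1).choose (n - k - 1) : ℝ) *
      (((((k + 1 : ℕ):ℝ) * ((1 - ε)⁻¹ * (1 - ε)⁻¹) + ((n - k - 1 : ℕ) : ℝ) * (ε⁻¹ * ε⁻¹)) +
        ((((k + 1 : ℕ):ℝ) * (1 - ε)⁻¹ - ((n - k - 1 : ℕ) : ℝ) * ε⁻¹))^2) * Pp (n - k - 1) (k + 1) ε) := by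
    have hA : (0:ℝ) < (1 - δ) / ((n - 1).choose (n - k - 1) : ℝ) := div_pos (by linarith) hcpos
    have hP := Pp_pos (n - k - 1) (k + 1) h0 h1
    have hk1' : (0:ℝ) < ((k + 1 : ℕ):ℝ) := by exact_mod_cast Nat.succ_pos k
    have hco : (0:ℝ) < ((k + 1 : ℕ):ℝ) * ((1 - ε)⁻¹ * (1 - ε)⁻¹) + ((n - k - 1 : ℕ) : ℝ) * (ε⁻¹ * ε⁻¹) +
        ((((k + 1 : ℕ):ℝ) * (1 - ε)⁻¹ - ((n - k - 1 : ℕ) : ℝ) * ε⁻¹))^2 := by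
      have : (0:ℝ) ≤ ((n - k - 1 : ℕ) : ℝ) * (ε⁻¹ * ε⁻¹) := by positivity
      have hyy := mul_pos hk1' (mul_pos hy hy)
      nlinarith [sq_nonneg ((((k + 1 : ℕ):ℝ) * (1 - ε)⁻¹ - ((n - k - 1 : ℕ) : ℝ) * ε⁻¹))]
    exact mul_pos hA (mul_pos hco hP)
  have t2 : 0 ≤ δ * ∑ q ∈ range (k + 1),
      (((n - 1).choose (n - k - 1 + q) : ℝ) / ((n - 1).choose (n - k - 1) : ℝ)) *
        (((((q:ℝ) + 1) * ((1 - ε)⁻¹ * (1 - ε)⁻¹) - (q:ℝ) * (ε⁻¹ * ε⁻¹)) +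
          (((q:ℝ) * ε⁻¹ + ((q:ℝ) + 1) * (1 - ε)⁻¹))^2) * Tt q ε) := by
    refine mul_nonneg hδ0.le (Finset.sum_nonneg fun q _ => ?_)
    refine mul_nonneg (by positivity) (mul_nonneg ?_ (Tt_pos q h0 h1).le)
    have hq2 : (q:ℝ) ≤ (q:ℝ)^2 := by
      have : q ≤ q^2 := Nat.le_self_pow two_ne_zero q
      exact_mod_cast this
    nlinarith [mul_pos hx hy, sq_nonneg ε⁻¹, sq_nonneg (1-ε)⁻¹,
      mul_nonneg (mul_pos hx hy).le (Nat.cast_nonneg q : (0:ℝ) ≤ q)]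
  linarith

lemma diff_eq (n k : ℕ) (hn : 3 ≤ n) (hk1 : 1 ≤ k) (hk2 : k ≤ n - 2) (δ : ℝ) {ε : ℝ}
    (h0 : ε ≠ 0) (h1 : (1:ℝ) - ε ≠ 0) :
    D1 n (k+1) δ ε + D2 n (k+1) δ ε - (D1 n k δ ε + D2 n k δ ε)
      = ε / ((n - k - 1 : ℕ) : ℝ) * Phi n k δ ε := by
  obtain ⟨m, hm⟩ : ∃ m, n - k - 1 = m + 1 := ⟨n - k - 2, by omega⟩
  have hidx : n - (k+1) - 1 = m := by omega
  have hmk : m + 1 + (k + 1) = n := by omega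
  have hCm1 : (0:ℝ) < ((n-1).choose (m+1) : ℝ) := by
    exact_mod_cast Nat.choose_pos (by omega)
  have hCm : (0:ℝ) < ((n-1).choose m : ℝ) := by
    exact_mod_cast Nat.choose_pos (by omega)
  have hcm : ((n-1).choose m : ℝ) * ((k:ℝ)+1) = ((n-1).choose (m+1) : ℝ) * ((m:ℝ)+1) := by
    have h := Nat.choose_succ_right_eq (n-1) m
    have h2 : n - 1 - m = k + 1 := by omega
    rw [h2] at h
    exact_mod_cast congrArg (Nat.cast : ℕ → ℝ) h.symm
  have hce : ((n-1).choose m : ℝ) = ((n-1).choose (m+1) : ℝ) * ((m:ℝ)+1) / ((k:ℝ)+1) := by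
    rw [eq_div_iff (by positivity)]; exact hcm
  have key1 : D1 n (k+1) δ ε - D1 n k δ ε
      = ε / ((m+1 : ℕ) : ℝ) * ((1 - δ) / ((n - 1).choose (m+1) : ℝ) *
        ((((k + 1 : ℕ):ℝ) * (1 - ε)⁻¹ - ((m+1 : ℕ) : ℝ) * ε⁻¹) * Pp (m+1) (k + 1) ε)) := by
    simp only [D1, hidx, hm, Pp]
    rw [hce]
    have hpe : ε ^ (m+1) = ε ^ m * ε := pow_succ ε m
    have hpv : (1-ε) ^ (k+1+1) = (1-ε)^(k+1) * (1-ε) := pow_succ (1-ε) (k+1)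
    rw [hpe, hpv]
    have hεm : ε ^ m ≠ 0 := pow_ne_zero m h0
    have hvk : (1-ε) ^ (k+1) ≠ 0 := pow_ne_zero _ h1
    push_cast
    field_simp
  have key2 : D2 n (k+1) δ ε - D2 n k δ ε
      = ε / ((m+1 : ℕ) : ℝ) * (δ * ∑ q ∈ range (k + 1),
          (((n - 1).choose (m + 1 + q) : ℝ) / ((n - 1).choose (m+1) : ℝ)) *
            ((((q:ℝ) * ε⁻¹ + ((q:ℝ) + 1) * (1 - ε)⁻¹)) * Tt q ε)) := by
    simp only [D2, hidx, hm]
    set C : ℕ → ℝ := fun i => ((n-1).choose i : ℝ) with hC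
    have hS1 : ∑ q ∈ range (k+1+1), (C (m + q) / C m) * ε ^ q * ((1-ε)^(q+1))⁻¹
        = ∑ q ∈ range (k+2), (C (m + q) / C m) * Tt q ε :=
      Finset.sum_congr rfl fun q _ => by unfold Tt; ring
    have hS2 : ∑ q ∈ range (k+1), (C (m + 1 + q) / C (m+1)) * ε ^ q * ((1-ε)^(q+1))⁻¹
        = ∑ q ∈ range (k+1), (C (m + 1 + q) / C (m+1)) * Tt q ε :=
      Finset.sum_congr rfl fun q _ => by unfold Tt; ring
    rw [hS1, hS2]
    set u : ℕ → ℝ := fun q =>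
      (C (m+1+q) * ((m:ℝ)+1+q)) / (C (m+1) * ((m:ℝ)+1)) * Tt q ε with hu
    have tele : ∑ q ∈ range (k+1),
        ((C (m + (q+1)) / C m) * Tt (q+1) ε
          - ((C (m + 1 + q) / C (m+1)) * Tt q ε
            + ε / ((m:ℝ)+1) * ((C (m + 1 + q) / C (m+1)) *
              ((((q:ℝ) * ε⁻¹ + ((q:ℝ) + 1) * (1 - ε)⁻¹)) * Tt q ε))))
        = u (k+1) - u 0 := by
      rw [← Finset.sum_range_sub u (k+1)]
      refine Finset.sum_congr rfl fun q hq => ?_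
      have hqk : q ≤ k := by simpa using Nat.lt_succ_iff.mp (Finset.mem_range.mp hq)
      have hb : ((n-1).choose (m+1+q+1) : ℝ) * ((m:ℝ)+1+q+1)
          = ((n-1).choose (m+1+q) : ℝ) * ((k:ℝ) - q) := by
        have h := Nat.choose_succ_right_eq (n-1) (m+1+q)
        have h2 : n - 1 - (m+1+q) = k - q := by omega
        rw [h2] at h
        have h3 := congrArg (Nat.cast : ℕ → ℝ) h
        push_cast [Nat.cast_sub hqk] at h3
        push_cast
        linarith [h3]
      have hbe : ((n-1).choose (m+1+q+1) : ℝ)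
          = ((n-1).choose (m+1+q) : ℝ) * ((k:ℝ) - q) / ((m:ℝ)+1+q+1) := by
        rw [eq_div_iff (by positivity)]; exact hb
      have hiq : m + (q+1) = m + 1 + q := by omega
      have hiq2 : m + 1 + (q + 1) = m + 1 + q + 1 := by omega
      simp only [hu, hC, hiq, hiq2]
      rw [Tt_succ q h1]
      push_cast
      rw [hbe, hce]
      field_simp
      ring
    rw [Finset.sum_range_succ']
    rw [Finset.sum_sub_distrib, Finset.sum_add_distrib] at tele
    have hu1 : u (k+1) = 0 := by
      have hz : (n-1).choose (m+1+(k+1)) = 0 := Nat.choose_eq_zero_of_lt (by omega)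
      simp only [hu, hC, hz]
      norm_num
    have hu0 : u 0 = Tt 0 ε := by
      simp only [hu, hC]
      norm_num
      rw [div_self (by positivity), one_mul]
    rw [hu1, hu0, ← Finset.mul_sum] at tele
    have hg0 : C (m + 0) / C m * Tt 0 ε = Tt 0 ε := by
      rw [Nat.add_zero, div_self (ne_of_gt hCm : C m ≠ 0), one_mul]
    rw [hg0]
    push_cast
    linear_combination δ * tele
  simp only [Phi, hm]
  push_cast at key1 key2 ⊢
  linear_combination key1 + key2

/-- For every `δ ∈ (0,1)` and `k ∈ {1,…,n−2}`, if `ε*_k ∈ (0,1)` is the unique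
strict minimizer of `ε ↦ D1(ε;k) + D2(ε;k)` on `(0,1)`, then
`D1(ε;k) + D2(ε;k) > D1(ε;k+1) + D2(ε;k+1)` on `(0,ε*_k)` and
`D1(ε;k) + D2(ε;k) < D1(ε;k+1) + D2(ε;k+1)` on `(ε*_k,1)`; in particular the
two curves cross exactly once on `(0,1)`, at `ε = ε*_k`. -/
theorem curves_cross_once (n : ℕ) (hn : 3 ≤ n)
    (δ : ℝ) (hδ0 : 0 < δ) (hδ1 : δ < 1)
    (k : ℕ) (hk1 : 1 ≤ k) (hk2 : k ≤ n - 2)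
    (εstar : ℝ) (hε : εstar ∈ Set.Ioo (0 : ℝ) 1)
    (hmin : ∀ ε ∈ Set.Ioo (0 : ℝ) 1, ε ≠ εstar →
      D1 n k δ εstar + D2 n k δ εstar < D1 n k δ ε + D2 n k δ ε) :
    (∀ ε ∈ Set.Ioo (0 : ℝ) εstar,
      D1 n k δ ε + D2 n k δ ε > D1 n (k + 1) δ ε + D2 n (k + 1) δ ε) ∧
    (∀ ε ∈ Set.Ioo εstar (1 : ℝ),
      D1 n k δ ε + D2 n k δ ε < D1 n (k + 1) δ ε + D2 n (k + 1) δ ε) ∧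
    (∀ ε ∈ Set.Ioo (0 : ℝ) 1,
      (D1 n k δ ε + D2 n k δ ε = D1 n (k + 1) δ ε + D2 n (k + 1) δ ε ↔
        ε = εstar)) := by
  
  have hε0 := hε.1
  have hε1 := hε.2
  have hapos : 0 < n - k - 1 := by omega
  have haR : (0:ℝ) < ((n - k - 1 : ℕ) : ℝ) := by exact_mod_cast hapos
  -- derivative facts
  have hIoo : ∀ x : ℝ, x ∈ Set.Ioo (0:ℝ) 1 → x ≠ 0 ∧ (1:ℝ) - x ≠ 0 := by
    intro x hx
    exact ⟨ne_of_gt hx.1, ne_of_gt (by linarith [hx.2])⟩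
  -- Φ vanishes at the minimizer
  have hloc : IsLocalMin (FF n k δ) εstar := by
    refine Filter.eventually_of_mem (isOpen_Ioo.mem_nhds hε) fun x hx => ?_
    rcases eq_or_ne x εstar with h | h
    · rw [h]
    · exact (hmin x hx h).le
  obtain ⟨hne0, hne1⟩ := hIoo εstar hε
  have hPhi0 : Phi n k δ εstar = 0 :=
    hloc.hasDerivAt_eq_zero (hasDerivAt_FF n k δ hne0 hne1)
  -- Φ is strictly monotone on (0,1)
  have hmono : StrictMonoOn (Phi n k δ) (Set.Ioo (0:ℝ) 1) := by
    apply strictMonoOn_of_deriv_pos (convex_Ioo (0:ℝ) 1)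
    · intro x hx
      obtain ⟨hx0, hx1⟩ := hIoo x hx
      exact (hasDerivAt_Phi n k δ hx0 hx1).continuousAt.continuousWithinAt
    · intro x hx
      rw [interior_Ioo] at hx
      obtain ⟨hx0, hx1⟩ := hIoo x hx
      rw [(hasDerivAt_Phi n k δ hx0 hx1).deriv]
      exact Psi_pos n k hk2 hn hδ0 hδ1 hx.1 hx.2
  -- sign of the difference of the two curves
  have hdiff : ∀ x ∈ Set.Ioo (0:ℝ) 1,
      D1 n (k+1) δ x + D2 n (k+1) δ x - (D1 n k δ x + D2 n k δ x)
        = x / ((n - k - 1 : ℕ) : ℝ) * Phi n k δ x := by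
    intro x hx
    obtain ⟨hx0, hx1⟩ := hIoo x hx
    exact diff_eq n k hn hk1 hk2 δ hx0 hx1
  refine ⟨?_, ?_, ?_⟩
  · intro x hx
    have hx' : x ∈ Set.Ioo (0:ℝ) 1 := ⟨hx.1, lt_trans hx.2 hε1⟩
    have hlt : Phi n k δ x < 0 := by
      have := hmono hx' hε hx.2
      rwa [hPhi0] at this
    have hneg : x / ((n - k - 1 : ℕ) : ℝ) * Phi n k δ x < 0 :=
      mul_neg_of_pos_of_neg (div_pos hx'.1 haR) hlt
    have := hdiff x hx'
    linarith
  · intro x hx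
    have hx' : x ∈ Set.Ioo (0:ℝ) 1 := ⟨lt_trans hε0 hx.1, hx.2⟩
    have hgt : 0 < Phi n k δ x := by
      have := hmono hε hx' hx.1
      rwa [hPhi0] at this
    have hpos : 0 < x / ((n - k - 1 : ℕ) : ℝ) * Phi n k δ x :=
      mul_pos (div_pos hx'.1 haR) hgt
    have := hdiff x hx'
    linarith
  · intro x hx
    have hd := hdiff x hx
    constructor
    · intro heq
      have hz : x / ((n - k - 1 : ℕ) : ℝ) * Phi n k δ x = 0 := by linarith
      have hxane : x / ((n - k - 1 : ℕ) : ℝ) ≠ 0 := ne_of_gt (div_pos hx.1 haR)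
      have hPhix : Phi n k δ x = 0 := by
        rcases mul_eq_zero.mp hz with h | h
        · exact absurd h hxane
        · exact h
      rcases lt_trichotomy x εstar with h | h | h
      · have := hmono hx hε h
        rw [hPhi0, hPhix] at this
        exact absurd this (lt_irrefl 0)
      · exact h
      · have := hmono hε hx h
        rw [hPhi0, hPhix] at this
        exact absurd this (lt_irrefl 0)
    · intro heq
      subst heq
      rw [hPhi0, mul_zero] at hd
      linarith
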